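/- Let E be a de Branges function, let N be a nearly invariant subspace of H(E) with no common zeros, let k_N be the reproducing kernel of N, and let α ∈ ℂ with Im α ≠ 0, so that k_N(α, α) ≠ 0. Then for every λ ∈ ℂ with λ ≠ conj α, the function h_λ(z) := ((z − conj α)/(z − α))·( k_N(λ, z) − (k_N(λ, α)/k_N(α, α))·k_N(α, z) ) extends to an entire function belonging to N, and for every f ∈ N with f(conj α) = 0 one has ⟨ f , h_λ ⟩_{H(E)} = ((λ − α)/(λ − conj α))·f(λ). -/

import Mathlib

open Complex MeasureTheory Filter ComplexConjugate
open scoped ENNReal Topology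

noncomputable section

/-- For an entire function `f`, `fStar f z = conj (f (conj z))`. -/
def fStar (f : ℂ → ℂ) : ℂ → ℂ := fun z => conj (f (conj z))

/-- A de Branges function: an entire function `E` with `|E(z)| > |E*(z)|` in the
upper half-plane. -/
def IsDeBrangesFunction (E : ℂ → ℂ) : Prop :=
  Differentiable ℂ E ∧ ∀ z : ℂ, 0 < z.im → ‖fStar E z‖ < ‖E z‖

/-- Membership in the Hardy space `H²(ℂ⁺)`: holomorphic on the upper half-plane with
uniformly bounded `L²`-means on horizontal lines. -/
def MemHardyH2 (g : ℂ → ℂ) : Prop :=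
  DifferentiableOn ℂ g {z : ℂ | 0 < z.im} ∧
  ∃ C : ℝ≥0∞, C < ⊤ ∧ ∀ y : ℝ, 0 < y →
    (∫⁻ x : ℝ, (‖g (x + y * Complex.I)‖₊ : ℝ≥0∞) ^ 2) ≤ C

/-- The de Branges space `H(E)` as a set of entire functions. -/
def deBrangesSpace (E : ℂ → ℂ) : Set (ℂ → ℂ) :=
  {f | Differentiable ℂ f ∧ MemHardyH2 (fun z => f z / E z) ∧
       MemHardyH2 (fun z => fStar f z / E z) ∧
       (∫⁻ x : ℝ, (‖f x / E x‖₊ : ℝ≥0∞) ^ 2) < ⊤}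

/-- The norm of `H(E)`: `‖f‖ = (∫_ℝ |f/E|² dx)^{1/2}`. -/
def dbNorm (E f : ℂ → ℂ) : ℝ := Real.sqrt (∫ x : ℝ, ‖f x / E x‖ ^ 2)

/-- The inner product of `H(E)`: `⟨f,g⟩ = ∫_ℝ f(x) conj (g x) |E(x)|⁻² dx`. -/
def dbInner (E f g : ℂ → ℂ) : ℂ :=
  ∫ x : ℝ, f x * conj (g x) * (((‖E x‖ ^ 2 : ℝ) : ℂ))⁻¹

/-- `N` is a nearly invariant subspace of `H(E)` with no common zeros:
a norm-closed linear subspace of `H(E)` whose elements have no common zero, in which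
zeros may be divided out. -/
def IsNearlyInvariantNoCommonZeros (E : ℂ → ℂ) (N : Set (ℂ → ℂ)) : Prop :=
  N ⊆ deBrangesSpace E ∧
  (fun _ => (0 : ℂ)) ∈ N ∧
  (∀ f ∈ N, ∀ g ∈ N, (fun z => f z + g z) ∈ N) ∧
  (∀ c : ℂ, ∀ f ∈ N, (fun z => c * f z) ∈ N) ∧
  (∀ f ∈ deBrangesSpace E,
    (∀ ε : ℝ, 0 < ε → ∃ g ∈ N, dbNorm E (fun z => f z - g z) < ε) → f ∈ N) ∧
  (∀ lam : ℂ, ∃ f ∈ N, f lam ≠ 0) ∧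
  (∀ f ∈ N, ∀ lam : ℂ, f lam = 0 → ∀ g : ℂ → ℂ, Differentiable ℂ g →
    (∀ z : ℂ, z ≠ lam → g z = f z / (z - lam)) → g ∈ N)

/-- `k` is the reproducing kernel of `N ⊆ H(E)`. -/
def IsReproducingKernel (E : ℂ → ℂ) (N : Set (ℂ → ℂ)) (k : ℂ → ℂ → ℂ) : Prop :=
  ∀ lam : ℂ, (fun z => k lam z) ∈ N ∧ ∀ f ∈ N, dbInner E f (fun z => k lam z) = f lam


private lemma entire_dslope {f : ℂ → ℂ} (hf : Differentiable ℂ f) (a : ℂ) :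
    Differentiable ℂ (dslope f a) := by
  intro b
  rcases eq_or_ne b a with rfl | h
  · obtain ⟨p, hp⟩ := (hf.analyticAt b)
    exact hp.has_fpower_series_dslope_fslope.analyticAt.differentiableAt
  · exact (differentiableAt_dslope_of_ne h).mpr (hf b)

private lemma dslope_mul_eq {f : ℂ → ℂ} (a : ℂ) (ha : f a = 0) (z : ℂ) :
    (z - a) * dslope f a z = f z := by
  have := sub_smul_dslope f a z
  rw [ha, sub_zero] at this
  simpa [smul_eq_mul] using this

private lemma countable_zeros {f : ℂ → ℂ} (hf : Differentiable ℂ f) (h0 : ∃ z, f z ≠ 0) :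
    Set.Countable {z : ℂ | f z = 0} := by
  have han : AnalyticOnNhd ℂ f Set.univ := fun z _ => hf.analyticAt z
  rcases han.eqOn_zero_or_eventually_ne_zero_of_preconnected isPreconnected_univ with h | h
  · obtain ⟨z, hz⟩ := h0; exact absurd (h (Set.mem_univ z)) hz
  · have hmem : {x : ℂ | f x ≠ 0} ∈ Filter.codiscrete ℂ := h
    rw [mem_codiscrete'] at hmem
    have hd : DiscreteTopology ↑({x : ℂ | f x ≠ 0}ᶜ) := hmem.2.to_subtype
    have hc : Set.Countable ({x : ℂ | f x ≠ 0}ᶜ) :=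
      Set.countable_coe_iff.mp ((TopologicalSpace.separableSpace_iff_countable
        (α := ↑({x : ℂ | f x ≠ 0}ᶜ))).mp inferInstance)
    have heq : ({x : ℂ | f x ≠ 0}ᶜ) = {z : ℂ | f z = 0} := by ext z; simp
    rwa [heq] at hc

private lemma eq_zero_of_ae_zero {f : ℂ → ℂ} (hf : Differentiable ℂ f)
    (hae : ∀ᵐ x : ℝ, f x = 0) : ∀ z, f z = 0 := by
  by_contra hcon
  push_neg at hcon
  have hcnt : Set.Countable {x : ℝ | f x = 0} := by
    have := (countable_zeros hf hcon).preimage Complex.ofReal_injective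
    simpa using this
  have h1 : volume {x : ℝ | f x = 0} = 0 := hcnt.measure_zero _
  have h2 : volume {x : ℝ | f x ≠ 0} = 0 := by
    rw [ae_iff] at hae; simpa using hae
  have huniv : (Set.univ : Set ℝ) = {x : ℝ | f x = 0} ∪ {x : ℝ | f x ≠ 0} := by
    ext x; simp [em]
  have := measure_union_le (μ := volume) {x : ℝ | f x = 0} {x : ℝ | f x ≠ 0}
  rw [← huniv, Real.volume_univ, h1, h2] at this
  simp at this

private lemma integrable_normsq {F E : ℂ → ℂ} (hF : Differentiable ℂ F)
    (hE : Differentiable ℂ E)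
    (h2 : (∫⁻ x : ℝ, (‖F x / E x‖₊ : ℝ≥0∞) ^ 2) < ⊤) :
    Integrable (fun x : ℝ => ‖F x / E x‖ ^ 2) := by
  have hm : Measurable (fun x : ℝ => ‖F x / E x‖ ^ 2) :=
    (((hF.continuous.comp continuous_ofReal).measurable.div
      (hE.continuous.comp continuous_ofReal).measurable).norm).pow_const 2
  refine ⟨hm.aestronglyMeasurable, ?_⟩
  rw [HasFiniteIntegral]
  calc ∫⁻ x : ℝ, (‖(‖F x / E x‖ ^ 2 : ℝ)‖₊ : ℝ≥0∞)
      = ∫⁻ x : ℝ, (‖F x / E x‖₊ : ℝ≥0∞) ^ 2 := by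
        congr 1; funext x
        rw [nnnorm_pow, nnnorm_norm]; push_cast; ring
    _ < ⊤ := h2

private lemma integrable_pair {E f g : ℂ → ℂ} (hE : Differentiable ℂ E)
    (hf : Differentiable ℂ f) (hg : Differentiable ℂ g)
    (hf2 : (∫⁻ x : ℝ, (‖f x / E x‖₊ : ℝ≥0∞) ^ 2) < ⊤)
    (hg2 : (∫⁻ x : ℝ, (‖g x / E x‖₊ : ℝ≥0∞) ^ 2) < ⊤) :
    Integrable (fun x : ℝ => f x * conj (g x) * (((‖E x‖ ^ 2 : ℝ) : ℂ))⁻¹) := by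
  have hf2' := integrable_normsq hf hE hf2
  have hg2' := integrable_normsq hg hE hg2
  have hm : Measurable (fun x : ℝ => f x * conj (g x) * (((‖E x‖ ^ 2 : ℝ) : ℂ))⁻¹) := by
    refine ((hf.continuous.comp continuous_ofReal).measurable.mul ?_).mul ?_
    · exact (Complex.continuous_conj.comp (hg.continuous.comp continuous_ofReal)).measurable
    · exact (Complex.measurable_ofReal.comp
        (((hE.continuous.comp continuous_ofReal).measurable.norm).pow_const 2)).inv
  refine (hf2'.add hg2').mono' hm.aestronglyMeasurable (Filter.Eventually.of_forall fun x => ?_)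
  simp only [Pi.add_apply]
  rcases eq_or_ne (E x) 0 with hEx | hEx
  · simp only [hEx, norm_zero]
    norm_num
  · have he : (0:ℝ) < ‖E (x:ℂ)‖ := norm_pos_iff.mpr hEx
    rw [norm_mul, norm_mul, RCLike.norm_conj, norm_inv, Complex.norm_real,
      Real.norm_of_nonneg (by positivity), norm_div, norm_div, div_pow, div_pow]
    rw [div_add_div _ _ (by positivity) (by positivity)]
    rw [inv_eq_one_div, mul_one_div, div_le_div_iff₀ (by positivity) (by positivity)]
    nlinarith [sq_nonneg (‖f (x:ℂ)‖ - ‖g (x:ℂ)‖), sq_nonneg (‖E (x:ℂ)‖), he,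
      norm_nonneg (f (x:ℂ)), norm_nonneg (g (x:ℂ)), mul_pos he he]

private lemma dbInner_add_mul (E f g h : ℂ → ℂ) (c : ℂ)
    (h1 : Integrable (fun x : ℝ => f x * conj (g x) * (((‖E x‖ ^ 2 : ℝ) : ℂ))⁻¹))
    (h2 : Integrable (fun x : ℝ => f x * conj (h x) * (((‖E x‖ ^ 2 : ℝ) : ℂ))⁻¹)) :
    dbInner E f (fun z => g z + c * h z) = dbInner E f g + conj c * dbInner E f h := by
  unfold dbInner
  rw [← MeasureTheory.integral_const_mul, ← integral_add h1 (h2.const_mul _)]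
  congr 1; funext x; simp only [map_add, map_mul]; ring

private lemma selfInner_integrand (E F : ℂ → ℂ) (x : ℝ) :
    F x * conj (F x) * (((‖E x‖ ^ 2 : ℝ) : ℂ))⁻¹ = ((‖F x / E x‖ ^ 2 : ℝ) : ℂ) := by
  rcases eq_or_ne (E x) 0 with hEx | hEx
  · simp [hEx]
  · have he : (0:ℝ) < ‖E (x:ℂ)‖ := norm_pos_iff.mpr hEx
    rw [Complex.mul_conj, ← Complex.ofReal_inv, ← Complex.ofReal_mul]
    congr 1
    rw [Complex.normSq_eq_norm_sq, norm_div, div_pow]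
    field_simp

private lemma kernel_ne_zero (E : ℂ → ℂ) (hE : IsDeBrangesFunction E)
    (N : Set (ℂ → ℂ)) (hN : IsNearlyInvariantNoCommonZeros E N)
    (k : ℂ → ℂ → ℂ) (hk : IsReproducingKernel E N k) (α : ℂ) :
    k α α ≠ 0 := by
  intro h0
  set F : ℂ → ℂ := fun z => k α z with hFdef
  have hFN : F ∈ N := (hk α).1
  have hFdb := hN.1 hFN
  have hFdiff : Differentiable ℂ F := hFdb.1
  have hFfin := hFdb.2.2.2
  have hEdiff : Differentiable ℂ E := hE.1
  have hrep : dbInner E F F = F α := (hk α).2 F hFN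
  -- the self inner product is a real integral
  have hint : Integrable (fun x : ℝ => ‖F x / E x‖ ^ 2) := integrable_normsq hFdiff hEdiff hFfin
  have hre : dbInner E F F = ((∫ x : ℝ, ‖F x / E x‖ ^ 2 : ℝ) : ℂ) := by
    have h1 : dbInner E F F = ∫ x : ℝ, ((‖F x / E x‖ ^ 2 : ℝ) : ℂ) := by
      unfold dbInner
      congr 1; funext x; exact selfInner_integrand E F x
    exact h1.trans integral_ofReal
  have hz : (∫ x : ℝ, ‖F x / E x‖ ^ 2 : ℝ) = 0 := by
    have : ((∫ x : ℝ, ‖F x / E x‖ ^ 2 : ℝ) : ℂ) = 0 := by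
      rw [← hre, hrep, hFdef]; exact h0
    exact_mod_cast this
  have hae : ∀ᵐ x : ℝ, ‖F x / E x‖ ^ 2 = 0 := by
    have := (integral_eq_zero_iff_of_nonneg (fun x => by positivity) hint).mp hz
    filter_upwards [this] with x hx using by simpa using hx
  -- almost everywhere E ≠ 0
  have hEI : E Complex.I ≠ 0 := by
    have := hE.2 Complex.I (by simp)
    intro h; rw [h, norm_zero] at this; exact (norm_nonneg _).not_gt this
  have hEcnt : Set.Countable {x : ℝ | E x = 0} := by
    have := (countable_zeros hEdiff ⟨Complex.I, hEI⟩).preimage Complex.ofReal_injective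
    simpa using this
  have haeE : ∀ᵐ x : ℝ, E (x : ℂ) ≠ 0 := by
    rw [ae_iff]
    have := hEcnt.measure_zero volume
    simpa using this
  have haeF : ∀ᵐ x : ℝ, F (x : ℂ) = 0 := by
    filter_upwards [hae, haeE] with x hx hEx
    have : F (x:ℂ) / E (x:ℂ) = 0 := by
      have := pow_eq_zero_iff (n := 2) (by norm_num) |>.mp hx
      exact norm_eq_zero.mp this
    rcases div_eq_zero_iff.mp this with h | h
    · exact h
    · exact absurd h hEx
  have hF0 : ∀ z, F z = 0 := eq_zero_of_ae_zero hFdiff haeF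
  obtain ⟨f, hfN, hfα⟩ := hN.2.2.2.2.2.1 α
  have hfrep : dbInner E f F = f α := (hk α).2 f hfN
  apply hfα
  rw [← hfrep]
  unfold dbInner
  have : (fun x : ℝ => f x * conj (F x) * (((‖E x‖ ^ 2 : ℝ) : ℂ))⁻¹) = fun _ => 0 := by
    funext x; rw [hF0 x]; simp
  rw [this, integral_zero]

/-- The auxiliary function `h_λ` from the proof of the kernel structure theorem extends to
an entire function belonging to `N`, and its inner products with functions of `N`
vanishing at `conj α` are as claimed. -/
theorem auxiliary_function_in_N
    (E : ℂ → ℂ) (hE : IsDeBrangesFunction E)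
    (N : Set (ℂ → ℂ)) (hN : IsNearlyInvariantNoCommonZeros E N)
    (k : ℂ → ℂ → ℂ) (hk : IsReproducingKernel E N k)
    (α : ℂ) (hα : α.im ≠ 0) (lam : ℂ) (hlam : lam ≠ conj α) :
    ∃ h : ℂ → ℂ, Differentiable ℂ h ∧ h ∈ N ∧
      (∀ z : ℂ, z ≠ α →
        h z = ((z - conj α) / (z - α)) * (k lam z - (k lam α / k α α) * k α z)) ∧
      ∀ f ∈ N, f (conj α) = 0 →
        dbInner E f h = ((lam - α) / (lam - conj α)) * f lam := by
  have hkαα : k α α ≠ 0 := kernel_ne_zero E hE N hN k hk α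
  have hEdiff : Differentiable ℂ E := hE.1
  set c : ℂ := k lam α / k α α with hc
  set g : ℂ → ℂ := fun z => k lam z + (-c) * k α z with hgdef
  have hklamN := (hk lam).1
  have hkαN := (hk α).1
  have hklamdiff : Differentiable ℂ (fun z => k lam z) := (hN.1 hklamN).1
  have hkαdiff : Differentiable ℂ (fun z => k α z) := (hN.1 hkαN).1
  have hgN : g ∈ N := hN.2.2.1 _ hklamN _ (hN.2.2.2.1 (-c) _ hkαN)
  have hgdiff : Differentiable ℂ g := hklamdiff.add (hkαdiff.const_mul _)
  have hgα : g α = 0 := by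
    simp only [hgdef, hc]
    field_simp
    ring
  set g1 : ℂ → ℂ := dslope g α with hg1def
  have hg1diff : Differentiable ℂ g1 := entire_dslope hgdiff α
  have hg1mul : ∀ z, (z - α) * g1 z = g z := fun z => dslope_mul_eq α hgα z
  have hg1N : g1 ∈ N := hN.2.2.2.2.2.2 g hgN α hgα g1 hg1diff (fun z hz => by
    rw [← hg1mul z]; field_simp [sub_ne_zero.mpr hz])
  set h : ℂ → ℂ := fun z => g z + (α - conj α) * g1 z with hhdef
  have hhN : h ∈ N := hN.2.2.1 g hgN _ (hN.2.2.2.1 (α - conj α) g1 hg1N)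
  have hhdiff : Differentiable ℂ h := hgdiff.add (hg1diff.const_mul _)
  have hhg1 : ∀ z, h z = (z - conj α) * g1 z := fun z => by
    simp only [hhdef]; rw [← hg1mul z]; ring
  refine ⟨h, hhdiff, hhN, ?_, ?_⟩
  · intro z hz
    have hz' : z - α ≠ 0 := sub_ne_zero.mpr hz
    have hrw : g1 z = g z / (z - α) := by
      rw [eq_div_iff hz', mul_comm]; exact hg1mul z
    rw [hhg1 z, hrw, hgdef]
    ring
  · intro f hfN hfα
    have hfdb := hN.1 hfN
    have hfdiff : Differentiable ℂ f := hfdb.1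
    set f1 : ℂ → ℂ := dslope f (conj α) with hf1def
    have hf1diff : Differentiable ℂ f1 := entire_dslope hfdiff (conj α)
    have hf1mul : ∀ z, (z - conj α) * f1 z = f z := fun z => dslope_mul_eq (conj α) hfα z
    have hf1N : f1 ∈ N := hN.2.2.2.2.2.2 f hfN (conj α) hfα f1 hf1diff (fun z hz => by
      rw [← hf1mul z]; field_simp [sub_ne_zero.mpr hz])
    set ft : ℂ → ℂ := fun z => f z + (conj α - α) * f1 z with hftdef
    have hftN : ft ∈ N := hN.2.2.1 f hfN _ (hN.2.2.2.1 (conj α - α) f1 hf1N)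
    have hftdiff : Differentiable ℂ ft := hfdiff.add (hf1diff.const_mul _)
    have hftmul : ∀ z, ft z = (z - α) * f1 z := fun z => by
      simp only [hftdef]; rw [← hf1mul z]; ring
    have step1 : dbInner E f h = dbInner E ft g := by
      unfold dbInner
      congr 1; funext x
      rw [hftmul x, hhg1 x, ← hf1mul x, ← hg1mul x]
      simp only [map_mul, map_sub, Complex.conj_ofReal, Complex.conj_conj]
      ring
    have hklamfin := (hN.1 hklamN).2.2.2
    have hkαfin := (hN.1 hkαN).2.2.2
    have hftfin := (hN.1 hftN).2.2.2
    have int1 := integrable_pair hEdiff hftdiff hklamdiff hftfin hklamfin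
    have int2 := integrable_pair hEdiff hftdiff hkαdiff hftfin hkαfin
    have step2 : dbInner E ft g = ft lam + conj (-c) * ft α := by
      rw [hgdef, dbInner_add_mul E ft _ _ (-c) int1 int2,
        (hk lam).2 ft hftN, (hk α).2 ft hftN]
    have hftα : ft α = 0 := by rw [hftmul α]; ring
    rw [step1, step2, hftα, mul_zero, add_zero, hftmul lam, ← hf1mul lam]
    field_simp [sub_ne_zero.mpr hlam]
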